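/- Let n ≥ 1, let U be a real n×n orthogonal matrix, let Λ be a real n×n diagonal matrix, and set X = U Λ Uᵀ. Let D be the n×n diagonal matrix with D_ii = 1 if Λ_ii > 0 and D_ii = 0 otherwise, and set V = U D Uᵀ. If every diagonal entry of X is strictly positive (X_ii > 0 for all i), then every diagonal entry of V is strictly positive (V_ii > 0 for all i). -/
import Mathlib

open Matrix

/-- If `X = U Λ Uᵀ` with `U` orthogonal and `Λ` diagonal, `D` the 0/1 diagonal matrix
selecting the positive eigenvalues, and `V = U D Uᵀ`, then positivity of all diagonal
entries of `X` implies positivity of all diagonal entries of `V`. -/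
theorem diag_pos_of_diag_pos
    (n : ℕ) (hn : 1 ≤ n) (U Λ : Matrix (Fin n) (Fin n) ℝ)
    (hU : Uᵀ * U = 1) (hΛ : Λ.IsDiag)
    (Xm : Matrix (Fin n) (Fin n) ℝ) (hX : Xm = U * Λ * Uᵀ)
    (D : Matrix (Fin n) (Fin n) ℝ)
    (hD : D = Matrix.diagonal (fun i => if 0 < Λ i i then (1 : ℝ) else 0))
    (V : Matrix (Fin n) (Fin n) ℝ) (hV : V = U * D * Uᵀ)
    (hpos : ∀ i, 0 < Xm i i) :
    ∀ i, 0 < V i i := by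
  intro i
  have hXi : Xm i i = ∑ j, U i j * Λ j j * U i j := by
    rw [hX, ← hΛ.diagonal_diag, Matrix.mul_apply]
    simp [Matrix.mul_diagonal, Matrix.transpose_apply, Matrix.diag]
  have hVi : V i i = ∑ j, U i j * (if 0 < Λ j j then (1:ℝ) else 0) * U i j := by
    rw [hV, hD, Matrix.mul_apply]
    simp [Matrix.mul_diagonal, Matrix.transpose_apply]
  -- there exists j with term positive
  have hx := hpos i
  rw [hXi] at hx
  obtain ⟨j, _, hj⟩ : ∃ j ∈ Finset.univ, 0 < U i j * Λ j j * U i j := by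
    by_contra h
    push_neg at h
    have : ∑ j, U i j * Λ j j * U i j ≤ 0 :=
      Finset.sum_nonpos fun j _ => h j (Finset.mem_univ j)
    linarith
  have hΛj : 0 < Λ j j := by
    rcases lt_trichotomy (Λ j j) 0 with h | h | h
    · nlinarith [sq_nonneg (U i j)]
    · rw [h] at hj; simp at hj
    · exact h
  have hUij : U i j ≠ 0 := by
    intro h; rw [h] at hj; simp at hj
  rw [hVi]
  apply Finset.sum_pos'
  · intro k _
    by_cases h : 0 < Λ k k <;> simp [h] <;> nlinarith [sq_nonneg (U i k)]
  · exact ⟨j, Finset.mem_univ j, by simp [hΛj]; positivity⟩
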